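/- (Lemma 3, converse direction) Let G be a DAG, and let s, z, u be vertices with z a proper ancestor of u in G. If there exists an in-neighbor t of u such that s ∈ J(z,t), then s ∈ J(z,u). -/

import Mathlib

variable {V : Type*}

/-- A directed graph (given as a relation) is acyclic: no nontrivial closed directed walk. -/
def Acyclic (G : V → V → Prop) : Prop := Irreflexive (Relation.TransGen G)

/-- `l` is a directed path in `G` from `a` to `b`: consecutive vertices are joined by arcs
of `G` and no vertex is repeated. -/
def IsDipath (G : V → V → Prop) (l : List V) (a b : V) : Prop :=
  l.Chain' G ∧ l.head? = some a ∧ l.getLast? = some b ∧ l.Nodup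

/-- The internal vertices of a path (all vertices except the two endpoints). -/
def internalVerts (l : List V) : List V := l.tail.dropLast

/-- `s` is a junction of the pair of distinct vertices `u, v` in `G`: there are directed
paths from `s` to `u` and from `s` to `v` sharing no vertex other than `s`. -/
def IsJunction (G : V → V → Prop) (s u v : V) : Prop :=
  u ≠ v ∧ ∃ p q : List V, IsDipath G p s u ∧ IsDipath G q s v ∧
    ∀ x, x ∈ p → x ∈ q → x = s

/-- `z` is the lowest common ancestor of `u` and `v` in the tree (arborescence) `T`:
a common ancestor that is a descendant of every common ancestor. -/
def IsTreeLCA (T : V → V → Prop) (u v z : V) : Prop :=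
  Relation.ReflTransGen T z u ∧ Relation.ReflTransGen T z v ∧
    ∀ y, Relation.ReflTransGen T y u → Relation.ReflTransGen T y v →
      Relation.ReflTransGen T y z

/-- `s` is a lowest common ancestor of `u, v` in the DAG `G`: a junction of `u, v` such
that there is no directed path from `s` to any other junction of `u, v`. -/
def IsLCA (G : V → V → Prop) (s u v : V) : Prop :=
  IsJunction G s u v ∧
    ∀ s', s' ≠ s → IsJunction G s' u v → ¬ Relation.TransGen G s s'

/-- A DFS arborescence of `G` rooted at `s`, spanning all descendants of `s`, together
with its post-order numbering and the standard structural properties of depth-first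
search: tree arcs are graph arcs, the root has no parent, parents are unique, every
`G`-descendant of `s` is in the tree, `post` is injective on the tree, `post` strictly
decreases from a vertex to its proper tree descendants, the post-order numbers of each
subtree form a contiguous interval, and every graph arc between tree vertices is a
tree/forward arc, a back arc, or a (post-order decreasing) cross arc. -/
structure DFSArborescence (G : V → V → Prop) (s : V) where
  T : V → V → Prop
  post : V → ℕ
  sub : ∀ ⦃a b⦄, T a b → G a b
  root_no_parent : ∀ a, ¬ T a s
  unique_parent : ∀ ⦃a b c⦄, T a b → T c b → a = c
  verts_reach : ∀ ⦃a b⦄, T a b → Relation.ReflTransGen T s a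
  spans : ∀ ⦃v⦄, Relation.ReflTransGen G s v → Relation.ReflTransGen T s v
  post_inj : ∀ ⦃u v⦄, Relation.ReflTransGen T s u → Relation.ReflTransGen T s v →
      post u = post v → u = v
  post_desc : ∀ ⦃u v⦄, Relation.ReflTransGen T s u → Relation.TransGen T u v →
      post v < post u
  post_contig : ∀ ⦃u v x⦄, Relation.ReflTransGen T s u → Relation.ReflTransGen T u v →
      Relation.ReflTransGen T s x → post v ≤ post x → post x ≤ post u →
      Relation.ReflTransGen T u x
  arc_classify : ∀ ⦃u v⦄, G u v → Relation.ReflTransGen T s u →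
      Relation.ReflTransGen T s v →
      Relation.ReflTransGen T u v ∨ Relation.ReflTransGen T v u ∨ post v < post u

lemma chain'_mem_reach {G : V → V → Prop} : ∀ (l : List V) (x b : V),
    l.Chain' G → x ∈ l → l.getLast? = some b → Relation.ReflTransGen G x b := by
  intro l
  induction l with
  | nil => intro x b _ hx _; simp at hx
  | cons a l ih =>
    intro x b hc hx hl
    rcases List.mem_cons.mp hx with rfl | hx
    · cases l with
      | nil =>
        simp at hl; subst hl; exact Relation.ReflTransGen.refl
      | cons c l' =>
        have hac : G x c := (List.isChain_cons_cons.mp hc).1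
        have : Relation.ReflTransGen G c b :=
          ih c b (List.isChain_cons_cons.mp hc).2 (List.mem_cons_self) (by simpa using hl)
        exact Relation.ReflTransGen.head hac this
    · cases l with
      | nil => simp at hx
      | cons c l' =>
        exact ih x b hc.tail hx (by rwa [List.getLast?_cons_cons] at hl)

lemma mem_dipath_reach {G : V → V → Prop} {l : List V} {a b x : V}
    (h : IsDipath G l a b) (hx : x ∈ l) : Relation.ReflTransGen G x b :=
  chain'_mem_reach l x b h.1 hx h.2.2.1

/-- Lemma 3, converse direction: if `z` is a proper ancestor of `u` and `s ∈ J(z,t)`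
for some in-neighbor `t` of `u`, then `s ∈ J(z,u)`. -/
theorem stmt9 (G : V → V → Prop) (hG : Acyclic G) (s z u : V)
    (hzu : Relation.TransGen G z u) (t : V) (ht : G t u)
    (hJ : IsJunction G s z t) : IsJunction G s z u := by
  obtain ⟨hzt, p, q, hp, hq, hdisj⟩ := hJ
  have huz : z ≠ u := by rintro rfl; exact hG z hzu
  have hup : u ∉ p := by
    intro hmem
    have : Relation.ReflTransGen G u z := mem_dipath_reach hp hmem
    exact hG u (Relation.TransGen.trans_right this hzu)
  have huq : u ∉ q := by
    intro hmem
    have : Relation.ReflTransGen G u t := mem_dipath_reach hq hmem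
    exact hG u (Relation.TransGen.trans_right this (Relation.TransGen.single ht))
  obtain ⟨hcq, hhq, hlq, hnq⟩ := hq
  have hqne : q ≠ [] := by rintro rfl; simp at hhq
  refine ⟨huz, p, q ++ [u], hp, ⟨?_, ?_, ?_, ?_⟩, ?_⟩
  · rw [List.Chain', List.isChain_append]
    refine ⟨hcq, List.isChain_singleton _, ?_⟩
    intro x hx y hy
    simp only [List.head?_cons, Option.mem_def, Option.some.injEq] at hy
    subst hy
    have : x = t := by rw [hlq] at hx; exact (by simpa using hx : t = x).symm
    subst this; exact ht
  · rw [List.head?_append_of_ne_nil _ hqne] <;> exact hhq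
  · simp
  · exact List.Nodup.append hnq (List.nodup_singleton u)
      (by simpa [List.disjoint_singleton] using huq)
  · intro x hxp hxq
    rcases List.mem_append.mp hxq with h | h
    · exact hdisj x hxp h
    · simp at h; subst h; exact absurd hxp hup
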